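/- Let n be a positive integer. Let X, X', Y, Y' be topological spaces, let θ : X → Y and θ' : X' → Y' be continuous, open surjections, and let σ = (σ₁,…,σₙ), τ = (τ₁,…,τₙ), σ̃ = (σ̃₁,…,σ̃ₙ), τ̃ = (τ̃₁,…,τ̃ₙ) be n-tuples of self-maps of X, X', Y, Y' respectively satisfying the intertwining relations θ ∘ σᵢ = σ̃ᵢ ∘ θ and θ' ∘ τᵢ = τ̃ᵢ ∘ θ' for all 1 ≤ i ≤ n. Suppose h : X → X' is a homeomorphism and H : Y → Y' is a homeomorphism with H ∘ θ = θ' ∘ h, and suppose (X, σ) and (X', τ) are piecewise conjugate via h, i.e., there is an open cover { U_g : g ∈ Sₙ } of X' (indexed by the symmetric group Sₙ on n letters) such that τᵢ(y) = h(σ_{g(i)}(h⁻¹(y))) for every y ∈ U_g, every g ∈ Sₙ, and every 1 ≤ i ≤ n. Then (Y, σ̃) and (Y', τ̃) are piecewise conjugate via H: the family { θ'(U_g) : g ∈ Sₙ } is an open cover of Y' and τ̃ᵢ(z) = H(σ̃_{g(i)}(H⁻¹(z))) for every z ∈ θ'(U_g), every g ∈ Sₙ, and every 1 ≤ i ≤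 n. -/
import Mathlib


/-- Topological core of the main theorem: piecewise conjugacy pushes forward along
continuous open surjections intertwining the dynamics. -/
theorem piecewise_conjugacy_pushforward
    {n : ℕ} (hn : 0 < n)
    {X X' Y Y' : Type*} [TopologicalSpace X] [TopologicalSpace X']
    [TopologicalSpace Y] [TopologicalSpace Y']
    (θ : X → Y) (θ' : X' → Y')
    (hθ_cont : Continuous θ) (hθ_open : IsOpenMap θ) (hθ_surj : Function.Surjective θ)
    (hθ'_cont : Continuous θ') (hθ'_open : IsOpenMap θ') (hθ'_surj : Function.Surjective θ')
    (σ : Fin n → X → X) (τ : Fin n → X' → X')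
    (σt : Fin n → Y → Y) (τt : Fin n → Y' → Y')
    (hσ : ∀ i, θ ∘ σ i = σt i ∘ θ)
    (hτ : ∀ i, θ' ∘ τ i = τt i ∘ θ')
    (h : X ≃ₜ X') (H : Y ≃ₜ Y')
    (hcomm : H ∘ θ = θ' ∘ h)
    (U : Equiv.Perm (Fin n) → Set X')
    (hU_open : ∀ g, IsOpen (U g))
    (hU_cover : ⋃ g, U g = Set.univ)
    (hconj : ∀ g : Equiv.Perm (Fin n), ∀ y ∈ U g, ∀ i : Fin n,
      τ i y = h (σ (g i) (h.symm y))) :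
    (∀ g, IsOpen (θ' '' U g)) ∧
    (⋃ g, θ' '' U g = Set.univ) ∧
    (∀ g : Equiv.Perm (Fin n), ∀ z ∈ θ' '' U g, ∀ i : Fin n,
      τt i z = H (σt (g i) (H.symm z))) := by
  refine ⟨fun g => hθ'_open _ (hU_open g), ?_, ?_⟩
  · rw [← Set.image_iUnion, hU_cover, Set.image_univ]
    exact hθ'_surj.range_eq
  · rintro g z ⟨y, hy, rfl⟩ i
    have key : ∀ x : X, θ' (h x) = H (θ x) := fun x => (congrFun hcomm x).symm
    have hHsymm : H.symm (θ' y) = θ (h.symm y) := by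
      have : θ' y = H (θ (h.symm y)) := by
        rw [← key, h.apply_symm_apply]
      rw [this, H.symm_apply_apply]
    calc τt i (θ' y) = θ' (τ i y) := (congrFun (hτ i) y).symm
      _ = θ' (h (σ (g i) (h.symm y))) := by rw [hconj g y hy i]
      _ = H (θ (σ (g i) (h.symm y))) := key _
      _ = H (σt (g i) (θ (h.symm y))) := by exact congrArg H (congrFun (hσ (g i)) (h.symm y))
      _ = H (σt (g i) (H.symm (θ' y))) := by rw [hHsymm]
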